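/- arXiv:2501.13803 — 3 statements merged into one kernel-verified Lean document; each statement's English description precedes it below -/
import Mathlib

section
/- Let Γ be a finite group acting freely on a finite connected graph X with first Betti number at least 2. Then the induced action of Γ on H₁(X, ℤ) is faithful. -/
open LinearMap Submodule Module

lemma trace_eq_add_of_invariant {K M : Type*} [Field K] [AddCommGroup M] [Module K M]
    [FiniteDimensional K M] (p : Submodule K M) (f : M →ₗ[K] M)
    (hf : ∀ x ∈ p, f x ∈ p) :
    LinearMap.trace K M f =
      LinearMap.trace K p (f.restrict hf) +
        LinearMap.trace K (M ⧸ p) (p.mapQ p f hf) := by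
  obtain ⟨q, hq⟩ := p.exists_isCompl
  let π : M →ₗ[K] p := p.linearProjOfIsCompl q hq
  let σ : M →ₗ[K] q := q.linearProjOfIsCompl p hq.symm
  have hsplit : f = (f ∘ₗ p.subtype) ∘ₗ π + (f ∘ₗ q.subtype) ∘ₗ σ := by
    ext x
    simp only [LinearMap.add_apply, LinearMap.comp_apply, Submodule.subtype_apply]
    rw [← map_add]
    congr 1
    exact (Submodule.projection_add_projection_eq_self hq x).symm
  have h1 : π ∘ₗ (f ∘ₗ p.subtype) = f.restrict hf := by
    ext x
    have hx : f ((x : p) : M) = ((⟨f x, hf x x.2⟩ : p) : M) := rfl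
    simp only [LinearMap.comp_apply, Submodule.subtype_apply, f.restrict_apply]
    rw [hx]; exact congrArg Subtype.val (Submodule.projectionOnto_apply_left hq _)
  let e : q ≃ₗ[K] (M ⧸ p) := (Submodule.quotientEquivOfIsCompl p q hq).symm
  have he : (e : q →ₗ[K] (M ⧸ p)) = p.mkQ ∘ₗ q.subtype := rfl
  have key : (e : q →ₗ[K] (M ⧸ p)) ∘ₗ (σ ∘ₗ (f ∘ₗ q.subtype)) =
      (p.mapQ p f hf) ∘ₗ (e : q →ₗ[K] (M ⧸ p)) := by
    ext x
    simp only [LinearMap.comp_apply, he, Submodule.mkQ_apply, Submodule.mapQ_apply,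
      Submodule.subtype_apply]
    rw [Submodule.Quotient.eq]
    set y := f ((x : q) : M) with hy
    have hdec := Submodule.projection_add_projection_eq_self hq y
    have h2 : ((π y : M)) = y - (σ y : M) := eq_sub_of_add_eq hdec
    have h3 : (σ y : M) - y = -((π y : M)) := by rw [h2]; abel
    rw [h3]
    exact neg_mem (π y).2
  have hconj : e.conj (σ ∘ₗ (f ∘ₗ q.subtype)) = p.mapQ p f hf := by
    refine LinearMap.ext fun y => ?_
    have := LinearMap.congr_fun key (e.symm y)
    simpa [LinearEquiv.conj_apply] using this
  have t1 : LinearMap.trace K M ((f ∘ₗ p.subtype) ∘ₗ π) =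
      LinearMap.trace K p (f.restrict hf) := by
    rw [LinearMap.trace_comp_comm' π (f ∘ₗ p.subtype), h1]
  have t2 : LinearMap.trace K M ((f ∘ₗ q.subtype) ∘ₗ σ) =
      LinearMap.trace K (M ⧸ p) (p.mapQ p f hf) := by
    rw [LinearMap.trace_comp_comm' σ (f ∘ₗ q.subtype), ← hconj, LinearMap.trace_conj']
  conv_lhs => rw [hsplit]
  rw [map_add, t1, t2]

/-- A finite group acting freely (and cellularly) on a finite connected graph with first
Betti number at least 2 acts faithfully on the first integral homology, i.e. on the
group of integral 1-cycles. -/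
theorem stmt_15 (Γ V E : Type) [Group Γ] [Finite Γ]
    [Fintype V] [Fintype E] [Nonempty V] [DecidableEq V]
    (s t : E → V)
    -- connectedness: any two vertices are joined by a chain of edges
    (hconn : ∀ v w : V,
      Relation.EqvGen (fun a b => ∃ e : E, (s e = a ∧ t e = b) ∨ (s e = b ∧ t e = a)) v w)
    [MulAction Γ V] [MulAction Γ E]
    (hs : ∀ (γ : Γ) (e : E), s (γ • e) = γ • s e)
    (ht : ∀ (γ : Γ) (e : E), t (γ • e) = γ • t e)
    -- the action is free (no fixed cells for nontrivial elements)
    (hfreeV : ∀ (γ : Γ) (v : V), γ • v = v → γ = 1)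
    (hfreeE : ∀ (γ : Γ) (e : E), γ • e = e → γ = 1)
    -- first Betti number at least 2: there are two linearly independent integral 1-cycles
    (hb2 : ∃ c₁ c₂ : E → ℤ,
      (∀ v : V, ∑ e : E, c₁ e * ((if t e = v then 1 else 0) - (if s e = v then 1 else 0)) = 0) ∧
      (∀ v : V, ∑ e : E, c₂ e * ((if t e = v then 1 else 0) - (if s e = v then 1 else 0)) = 0) ∧
      ∀ a b : ℤ, (fun e => a * c₁ e + b * c₂ e) = (0 : E → ℤ) → a = 0 ∧ b = 0) :
    ∀ γ : Γ, γ ≠ 1 → ∃ c : E → ℤ,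
      (∀ v : V, ∑ e : E, c e * ((if t e = v then 1 else 0) - (if s e = v then 1 else 0)) = 0)
      ∧ (fun e => c (γ⁻¹ • e)) ≠ c := by
  classical
  intro γ hγ
  by_contra hcon
  push_neg at hcon
  -- the boundary map over ℚ
  let D : (E → ℚ) →ₗ[ℚ] (V → ℚ) :=
    { toFun := fun c v => ∑ e, c e * ((if t e = v then 1 else 0) - (if s e = v then 1 else 0))
      map_add' := by
        intro x y; funext v
        simp [add_mul, Finset.sum_add_distrib]
      map_smul' := by
        intro r x; funext v
        simp [Finset.mul_sum, mul_assoc] }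
  have hD : ∀ (c : E → ℚ) (v : V),
      D c v = ∑ e, c e * ((if t e = v then 1 else 0) - (if s e = v then 1 else 0)) := fun _ _ => rfl
  -- the action of γ on chains
  let gE : (E → ℚ) →ₗ[ℚ] (E → ℚ) :=
    { toFun := fun c e => c (γ⁻¹ • e)
      map_add' := by intro x y; funext e; simp
      map_smul' := by intro r x; funext e; simp }
  let gV : (V → ℚ) →ₗ[ℚ] (V → ℚ) :=
    { toFun := fun c v => c (γ⁻¹ • v)
      map_add' := by intro x y; funext v; simp
      map_smul' := by intro r x; funext v; simp }
  -- equivariance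
  have hequiv : ∀ x : E → ℚ, D (gE x) = gV (D x) := by
    intro x
    funext v
    show ∑ e, x (γ⁻¹ • e) * ((if t e = v then 1 else 0) - (if s e = v then 1 else 0))
      = ∑ e, x e * ((if t e = γ⁻¹ • v then 1 else 0) - (if s e = γ⁻¹ • v then 1 else 0))
    rw [← Equiv.sum_comp (MulAction.toPerm γ)
      (fun e => x (γ⁻¹ • e) * ((if t e = v then 1 else 0) - (if s e = v then 1 else 0)))]
    refine Finset.sum_congr rfl fun e _ => ?_
    have h1 : γ⁻¹ • (MulAction.toPerm γ e) = e := by simp [MulAction.toPerm]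
    have h2 : t (MulAction.toPerm γ e) = γ • t e := by
      show t (γ • e) = γ • t e; exact ht γ e
    have h3 : s (MulAction.toPerm γ e) = γ • s e := by
      show s (γ • e) = γ • s e; exact hs γ e
    rw [h1, h2, h3]
    congr 2
    · simp [smul_eq_iff_eq_inv_smul]
    · simp [smul_eq_iff_eq_inv_smul]
  -- kernel and range
  set Z := LinearMap.ker D with hZ
  set W := LinearMap.range D with hW
  have hZinv : ∀ x ∈ Z, gE x ∈ Z := by
    intro x hx
    simp only [hZ, LinearMap.mem_ker] at hx ⊢
    rw [hequiv, hx, map_zero]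
  have hWinv : ∀ x ∈ W, gV x ∈ W := by
    rintro x ⟨c, rfl⟩
    exact ⟨gE c, hequiv c⟩
  -- traces of the permutation actions are zero
  have hγinv : γ⁻¹ ≠ 1 := by simpa using hγ
  have htrE : LinearMap.trace ℚ (E → ℚ) gE = 0 := by
    rw [LinearMap.trace_eq_matrix_trace ℚ (Pi.basisFun ℚ E), Matrix.trace]
    refine Finset.sum_eq_zero fun e _ => ?_
    have hne : γ⁻¹ • e ≠ e := fun h => hγinv (hfreeE γ⁻¹ e h)
    rw [Matrix.diag_apply, LinearMap.toMatrix_apply, Pi.basisFun_repr, Pi.basisFun_apply]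
    show (Pi.single e (1 : ℚ) : E → ℚ) (γ⁻¹ • e) = 0
    exact Function.update_of_ne hne 1 0
  have htrV : LinearMap.trace ℚ (V → ℚ) gV = 0 := by
    rw [LinearMap.trace_eq_matrix_trace ℚ (Pi.basisFun ℚ V), Matrix.trace]
    refine Finset.sum_eq_zero fun v _ => ?_
    have hne : γ⁻¹ • v ≠ v := fun h => hγinv (hfreeV γ⁻¹ v h)
    rw [Matrix.diag_apply, LinearMap.toMatrix_apply, Pi.basisFun_repr, Pi.basisFun_apply]
    show (Pi.single v (1 : ℚ) : V → ℚ) (γ⁻¹ • v) = 0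
    exact Function.update_of_ne hne 1 0
  -- γ acts as the identity on rational cycles
  have hZid : ∀ x ∈ Z, gE x = x := by
    intro x hx
    have hx' : D x = 0 := hx
    -- clear denominators
    set d : ℤ := ∏ e : E, ((x e).den : ℤ) with hd
    have hdpos : 0 < d := Finset.prod_pos fun e _ => Int.natCast_pos.2 (x e).pos
    have hdvd : ∀ e : E, ((x e).den : ℤ) ∣ d := fun e =>
      Finset.dvd_prod_of_mem _ (Finset.mem_univ e)
    set c : E → ℤ := fun e => (d / ((x e).den : ℤ)) * (x e).num with hc
    have hcast : ∀ e : E, ((c e : ℚ)) = (d : ℚ) * x e := by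
      intro e
      have h1 : ((x e).num : ℚ) = ((x e).den : ℚ) * x e := by
        rw [← Rat.den_mul_eq_num]
      have h2 : ((d / ((x e).den : ℤ)) * ((x e).den : ℤ)) = d :=
        Int.ediv_mul_cancel (hdvd e)
      calc ((c e : ℚ)) = ((d / ((x e).den : ℤ) : ℤ) : ℚ) * ((x e).num : ℚ) := by
            rw [hc]; push_cast; ring
        _ = ((d / ((x e).den : ℤ) : ℤ) : ℚ) * (((x e).den : ℚ) * x e) := by rw [h1]
        _ = (((d / ((x e).den : ℤ)) * ((x e).den : ℤ) : ℤ) : ℚ) * x e := by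
            push_cast; ring
        _ = (d : ℚ) * x e := by rw [h2]
    have hcyc : ∀ v : V,
        ∑ e, c e * ((if t e = v then 1 else 0) - (if s e = v then 1 else 0)) = 0 := by
      intro v
      have hQ : ((∑ e, c e * ((if t e = v then 1 else 0) - (if s e = v then 1 else 0)) : ℤ) : ℚ)
          = (d : ℚ) * (D x v) := by
        rw [hD]
        push_cast
        rw [Finset.mul_sum]
        refine Finset.sum_congr rfl fun e _ => ?_
        rw [hcast e]
        ring
      have : ((∑ e, c e * ((if t e = v then 1 else 0) - (if s e = v then 1 else 0)) : ℤ) : ℚ)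
          = 0 := by rw [hQ, hx']; simp
      exact_mod_cast this
    have hfix := hcon c hcyc
    funext e
    have he : c (γ⁻¹ • e) = c e := congrFun hfix e
    have : (d : ℚ) * x (γ⁻¹ • e) = (d : ℚ) * x e := by
      rw [← hcast, ← hcast, he]
    have hd0 : (d : ℚ) ≠ 0 := by exact_mod_cast hdpos.ne'
    exact mul_left_cancel₀ hd0 this
  -- finrank of Z is at least 2
  have hZ2 : 2 ≤ finrank ℚ Z := by
    obtain ⟨c₁, c₂, h₁, h₂, hind⟩ := hb2
    have mem : ∀ (c : E → ℤ),
        (∀ v : V, ∑ e, c e * ((if t e = v then 1 else 0) - (if s e = v then 1 else 0)) = 0) →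
        (fun e => (c e : ℚ)) ∈ Z := by
      intro c hcyc
      show D (fun e => (c e : ℚ)) = 0
      funext v
      rw [hD]
      have := hcyc v
      have hQ : ((∑ e, c e * ((if t e = v then 1 else 0) - (if s e = v then 1 else 0)) : ℤ) : ℚ)
          = ∑ e, (c e : ℚ) * ((if t e = v then 1 else 0) - (if s e = v then 1 else 0)) := by
        push_cast
        rfl
      rw [← hQ, this]
      simp
    set q₁ : Z := ⟨fun e => (c₁ e : ℚ), mem c₁ h₁⟩ with hq₁
    set q₂ : Z := ⟨fun e => (c₂ e : ℚ), mem c₂ h₂⟩ with hq₂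
    have hli : LinearIndependent ℚ ![q₁, q₂] := by
      rw [LinearIndependent.pair_iff]
      intro a b hab
      have hab' : ∀ e : E, a * (c₁ e : ℚ) + b * (c₂ e : ℚ) = 0 := by
        intro e
        have := congrArg (fun z : Z => (z : E → ℚ) e) hab
        simpa [hq₁, hq₂] using this
      set A : ℤ := a.num * b.den with hA
      set B : ℤ := b.num * a.den with hB
      have hAc : (A : ℚ) = a * (a.den * b.den : ℤ) := by
        rw [hA]; push_cast; rw [← Rat.mul_den_eq_num]; ring
      have hBc : (B : ℚ) = b * (a.den * b.den : ℤ) := by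
        rw [hB]; push_cast; rw [← Rat.mul_den_eq_num]; ring
      have hZer : (fun e => A * c₁ e + B * c₂ e) = (0 : E → ℤ) := by
        funext e
        have : ((A * c₁ e + B * c₂ e : ℤ) : ℚ) = 0 := by
          push_cast
          rw [hAc, hBc]
          push_cast
          linear_combination ((a.den : ℚ) * (b.den : ℚ)) * hab' e
        exact_mod_cast this
      obtain ⟨hA0, hB0⟩ := hind A B hZer
      constructor
      · have : a.num = 0 := by
          have hbden : (b.den : ℤ) ≠ 0 := by exact_mod_cast b.den_nz
          exact (mul_eq_zero.1 hA0).resolve_right hbden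
        exact Rat.num_eq_zero.1 this
      · have : b.num = 0 := by
          have haden : (a.den : ℤ) ≠ 0 := by exact_mod_cast a.den_nz
          exact (mul_eq_zero.1 hB0).resolve_right haden
        exact Rat.num_eq_zero.1 this
    have := hli.fintype_card_le_finrank
    simpa using this
  -- differences of vertex indicator functions lie in W
  have hedge : ∀ e : E,
      (fun v => ((if t e = v then (1 : ℚ) else 0) - (if s e = v then 1 else 0))) ∈ W := by
    intro e
    refine ⟨Pi.single e 1, ?_⟩
    funext v
    rw [hD]
    rw [Finset.sum_eq_single e]
    · simp
    · intro e' _ hne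
      rw [Pi.single_eq_of_ne hne]
      ring
    · intro h
      exact absurd (Finset.mem_univ e) h
  set δ : V → (V → ℚ) := fun v => Pi.single v 1 with hδ
  have hdelta : ∀ a b : V, δ a - δ b ∈ W := by
    intro a b
    induction hconn a b with
    | rel x y h =>
      obtain ⟨e, he⟩ := h
      have hfun : ∀ u w : V, (fun v => ((if u = v then (1 : ℚ) else 0) - if w = v then 1 else 0))
          = δ u - δ w := by
        intro u w
        funext v
        simp [hδ, Pi.single_apply, eq_comm]
      rcases he with ⟨hse, hte⟩ | ⟨hse, hte⟩
      · have := hedge e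
        rw [hse, hte, hfun] at this
        have h2 : δ x - δ y = -(δ y - δ x) := by abel
        rw [h2]
        exact neg_mem this
      · have := hedge e
        rw [hse, hte, hfun] at this
        exact this
    | refl x => simpa using zero_mem W
    | symm x y _ ih =>
      have h2 : δ y - δ x = -(δ x - δ y) := by abel
      rw [h2]
      exact neg_mem ih
    | trans x y z _ _ ih1 ih2 =>
      have h2 : δ x - δ z = (δ x - δ y) + (δ y - δ z) := by abel
      rw [h2]
      exact add_mem ih1 ih2
  -- γ acts by permuting indicator functions
  have hgV_single : ∀ v : V, gV (δ v) = δ (γ • v) := by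
    intro v
    funext w
    have h0 : gV (δ v) w = δ v (γ⁻¹ • w) := rfl
    rw [h0, hδ]
    simp only [Pi.single_apply]
    simp only [inv_smul_eq_iff]
  have hsingle_smul : ∀ (v : V) (x : V → ℚ), Pi.single v (x v) = x v • δ v := by
    intro v x
    funext w
    simp [hδ, Pi.single_apply, smul_ite]
  have hWx : ∀ x : V → ℚ, gV x - x ∈ W := by
    intro x
    have hxsum : x = ∑ v, x v • δ v := by
      conv_lhs => rw [← Finset.univ_sum_single x]
      exact Finset.sum_congr rfl fun v _ => hsingle_smul v x
    have hkey : gV x - x = ∑ v, x v • (δ (γ • v) - δ v) := by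
      conv_lhs => rw [hxsum]
      rw [map_sum, ← Finset.sum_sub_distrib]
      refine Finset.sum_congr rfl fun v _ => ?_
      rw [map_smul, hgV_single, smul_sub]
    rw [hkey]
    exact Submodule.sum_mem _ fun v _ => Submodule.smul_mem _ _ (hdelta (γ • v) v)
  have hmapQ : W.mapQ W gV hWinv = LinearMap.id := by
    apply Submodule.linearMap_qext
    refine LinearMap.ext fun x => ?_
    simp only [LinearMap.comp_apply, Submodule.mkQ_apply, Submodule.mapQ_apply,
      LinearMap.id_apply]
    rw [Submodule.Quotient.eq]
    exact hWx x
  -- the quotient has dimension at most 1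
  have hQ1 : finrank ℚ ((V → ℚ) ⧸ W) ≤ 1 := by
    obtain ⟨v₀⟩ := (inferInstance : Nonempty V)
    refine finrank_le_one (W.mkQ (δ v₀)) fun w => ?_
    obtain ⟨x, rfl⟩ := W.mkQ_surjective w
    refine ⟨∑ v, x v, ?_⟩
    have hxsum : x = ∑ v, x v • δ v := by
      conv_lhs => rw [← Finset.univ_sum_single x]
      exact Finset.sum_congr rfl fun v _ => hsingle_smul v x
    conv_rhs => rw [hxsum]
    rw [map_sum, Finset.sum_smul]
    refine Finset.sum_congr rfl fun v _ => ?_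
    have h2 : W.mkQ (δ v) = W.mkQ (δ v₀) := by
      rw [Submodule.mkQ_apply, Submodule.mkQ_apply, Submodule.Quotient.eq]
      exact hdelta v v₀
    rw [map_smul, h2]
  -- put everything together via the trace
  have hrestrE : gE.restrict hZinv = LinearMap.id := by
    ext x
    exact congrFun (hZid x x.2) _
  have eq1 := trace_eq_add_of_invariant Z gE hZinv
  have eq2 := trace_eq_add_of_invariant W gV hWinv
  rw [htrE, hrestrE, LinearMap.trace_id] at eq1
  rw [htrV, hmapQ, LinearMap.trace_id] at eq2
  -- identify trace on Z-quotient with trace on W via the first isomorphism theorem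
  have hiso : LinearMap.trace ℚ ((E → ℚ) ⧸ Z) (Z.mapQ Z gE hZinv)
      = LinearMap.trace ℚ W (gV.restrict hWinv) := by
    let e : ((E → ℚ) ⧸ Z) ≃ₗ[ℚ] W := D.quotKerEquivRange
    have key : (e : ((E → ℚ) ⧸ Z) →ₗ[ℚ] W) ∘ₗ (Z.mapQ Z gE hZinv)
        = (gV.restrict hWinv) ∘ₗ (e : ((E → ℚ) ⧸ Z) →ₗ[ℚ] W) := by
      apply Submodule.linearMap_qext
      refine LinearMap.ext fun x => ?_
      simp only [LinearMap.comp_apply, Submodule.mkQ_apply, Submodule.mapQ_apply]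
      apply Subtype.ext
      show ((e (Submodule.Quotient.mk (gE x))) : V → ℚ) = gV (e (Submodule.Quotient.mk x))
      rw [LinearMap.quotKerEquivRange_apply_mk, LinearMap.quotKerEquivRange_apply_mk]
      exact hequiv x
    have hconj : e.conj (Z.mapQ Z gE hZinv) = gV.restrict hWinv := by
      refine LinearMap.ext fun y => ?_
      have := LinearMap.congr_fun key (e.symm y)
      simpa [LinearEquiv.conj_apply] using this
    rw [← hconj, LinearMap.trace_conj']
  rw [hiso] at eq1
  -- now: 0 = finrank Z + tr(gV|W) and 0 = tr(gV|W) + finrank quotient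
  have hfin : (finrank ℚ Z : ℚ) = (finrank ℚ ((V → ℚ) ⧸ W) : ℚ) := by linarith
  have hfin' : finrank ℚ Z = finrank ℚ ((V → ℚ) ⧸ W) := by exact_mod_cast hfin
  omega
end

section
/- Let F be a free group of finite rank n ≥ 2, let K ⊴ F be a normal subgroup of finite index with quotient Γ = F/K such that the rank of K (as a free group) is at least 2, and let ψ ∈ Aut(F) with ψ(K) = K. If the map induced by ψ on the abelianization K/[K,K] is the identity, then ψ induces the identity automorphism of Γ, i.e. ψ(w)w⁻¹ ∈ K for all w ∈ F. -/
noncomputable section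

/-- The complex affine group `z ↦ a • z + t`. -/
structure AffC where
  a : ℂˣ
  t : ℂ

namespace AffC

lemma ext' {p q : AffC} (h1 : p.a = q.a) (h2 : p.t = q.t) : p = q := by
  cases p; cases q; simp_all

instance : Mul AffC := ⟨fun p q => ⟨p.a * q.a, p.t + (p.a : ℂ) * q.t⟩⟩
instance : One AffC := ⟨⟨1, 0⟩⟩
instance : Inv AffC := ⟨fun p => ⟨p.a⁻¹, -(((p.a⁻¹ : ℂˣ) : ℂ) * p.t)⟩⟩

@[simp] lemma mul_a (p q : AffC) : (p * q).a = p.a * q.a := rfl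
@[simp] lemma mul_t (p q : AffC) : (p * q).t = p.t + (p.a : ℂ) * q.t := rfl
@[simp] lemma one_a : (1 : AffC).a = 1 := rfl
@[simp] lemma one_t : (1 : AffC).t = 0 := rfl
@[simp] lemma inv_a (p : AffC) : (p⁻¹).a = p.a⁻¹ := rfl
@[simp] lemma inv_t (p : AffC) : (p⁻¹).t = -(((p.a⁻¹ : ℂˣ) : ℂ) * p.t) := rfl

instance : Group AffC where
  mul_assoc p q r := ext' (mul_assoc _ _ _)
    (by simp only [mul_t, mul_a, Units.val_mul]; ring)
  one_mul p := ext' (one_mul _) (by simp)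
  mul_one p := ext' (mul_one _) (by simp)
  inv_mul_cancel p := ext' (inv_mul_cancel _)
    (by simp only [mul_t, inv_t, inv_a, one_t]; ring)

/-- The linear part as a monoid hom. -/
def aHom : AffC →* ℂˣ := { toFun := AffC.a, map_one' := rfl, map_mul' := fun _ _ => rfl }

@[simp] lemma aHom_apply (p : AffC) : aHom p = p.a := rfl

lemma t_eq_zero_of_commutator {P Q : AffC} (hQ : Q.a = 1) (hP : ((P.a : ℂˣ) : ℂ) ≠ 1)
    (h : (P * Q * P⁻¹ * Q⁻¹).t = 0) : Q.t = 0 := by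
  have expand : (P * Q * P⁻¹ * Q⁻¹).t = ((P.a : ℂ) - 1) * Q.t := by
    simp only [mul_t, mul_a, inv_t, inv_a, hQ, inv_one, Units.val_one, Units.val_mul,
      Units.val_inv_eq_inv_val, one_mul, mul_one]
    field_simp
    ring
  rw [expand] at h
  rcases mul_eq_zero.1 h with h' | h'
  · exact absurd (by linear_combination h' : (P.a : ℂ) = 1) hP
  · exact h'

end AffC

/-- Distinct generators of a free group do not commute. -/
lemma freeGroup_not_commute {ι : Type*} {i j : ι} (h : i ≠ j) :
    FreeGroup.of i * FreeGroup.of j ≠ FreeGroup.of j * FreeGroup.of i := by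
  classical
  intro hc
  let f : ι → Equiv.Perm (Fin 3) := fun k => if k = i then Equiv.swap 0 1 else Equiv.swap 1 2
  have hfi : f i = Equiv.swap 0 1 := if_pos rfl
  have hfj : f j = Equiv.swap 1 2 := if_neg h.symm
  have := congrArg (FreeGroup.lift f) hc
  rw [map_mul, map_mul, FreeGroup.lift_apply_of, FreeGroup.lift_apply_of, hfi, hfj] at this
  exact (by decide : Equiv.swap (0 : Fin 3) 1 * Equiv.swap 1 2 ≠ Equiv.swap 1 2 * Equiv.swap 0 1)
    this

lemma freeGroup_commute_of_subsingleton {S : Type*} [Subsingleton S] (x y : FreeGroup S) :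
    Commute x y := by
  have aux : ∀ (s : S) (z : FreeGroup S), Commute (FreeGroup.of s) z := by
    intro s z
    induction z using FreeGroup.induction_on with
    | C1 => exact Commute.one_right _
    | of t => rw [Subsingleton.elim t s]
    | inv_of t ht => exact ht.inv_right
    | mul a c ha hc => exact ha.mul_right hc
  induction x using FreeGroup.induction_on with
  | C1 => exact Commute.one_left _
  | of t => exact aux t y
  | inv_of t ht => exact ht.inv_left
  | mul a c ha hc => exact ha.mul_left hc

/-- If `u ∉ K` acted trivially (mod `⁅K,K⁆`) by conjugation on the nonabelian finite-index
normal subgroup `K` of a free group, we get a contradiction. -/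
lemma faithful_aux {F : Type*} [Group F] [IsFreeGroup F] (K : Subgroup F) [K.Normal]
    [K.FiniteIndex] (γ₁ γ₂ : F) (h₁ : γ₁ ∈ K) (h₂ : γ₂ ∈ K) (hnc : γ₁ * γ₂ ≠ γ₂ * γ₁)
    (u : F) (hu : u ∉ K)
    (star : ∀ γ ∈ K, u * γ * u⁻¹ * γ⁻¹ ∈ (⁅K, K⁆ : Subgroup F)) : False := by
  classical
  have hπu : (QuotientGroup.mk u : F ⧸ K) ≠ 1 := fun h => hu ((QuotientGroup.eq_one_iff u).1 h)
  set S0 : Set F := ↑K ∪ {u} with hS0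
  set Hgp : Subgroup F := Subgroup.closure S0 with hHgp
  have hKH : ∀ {x : F}, x ∈ K → x ∈ Hgp := fun hx => Subgroup.subset_closure (Or.inl hx)
  have huH : u ∈ Hgp := Subgroup.subset_closure (Or.inr rfl)
  set zu : F ⧸ K := QuotientGroup.mk u with hzu
  set Z : Subgroup (F ⧸ K) := Subgroup.zpowers zu with hZ
  have hZmem : ∀ h : Hgp, QuotientGroup.mk (h : F) ∈ Z := by
    intro h
    have hle : Hgp ≤ Z.comap (QuotientGroup.mk' K) := by
      rw [hHgp, Subgroup.closure_le]
      rintro x (hx | hx)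
      · have hx1 : QuotientGroup.mk x = (1 : F ⧸ K) := (QuotientGroup.eq_one_iff x).2 hx
        exact Subgroup.mem_comap.2 (by rw [QuotientGroup.mk'_apply, hx1]; exact one_mem Z)
      · rcases hx with rfl
        exact Subgroup.mem_comap.2
          (by rw [QuotientGroup.mk'_apply]; exact Subgroup.mem_zpowers _)
    exact hle h.2
  haveI : Finite (F ⧸ K) := K.finite_quotient_of_finiteIndex
  haveI : NeZero ((Monoid.exponent Z : ℕ) : ℂ) :=
    ⟨Nat.cast_ne_zero.2 Monoid.exponent_ne_zero_of_finite⟩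
  open IsMulCommutative in
  obtain ⟨χ, hχ⟩ := CommGroup.exists_apply_ne_one_of_hasEnoughRootsOfUnity Z ℂ
    (a := (⟨zu, Subgroup.mem_zpowers _⟩ : Z)) (fun hh => hπu (congrArg Subtype.val hh))
  set r : Hgp →* Z := ((QuotientGroup.mk' K).comp Hgp.subtype).codRestrict Z
    (fun h => hZmem h) with hr
  set achar : Hgp →* ℂˣ := χ.comp r with hachar
  have hrU : r ⟨u, huH⟩ = ⟨zu, Subgroup.mem_zpowers _⟩ := rfl
  have ha_u : achar ⟨u, huH⟩ ≠ 1 := by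
    rw [hachar, MonoidHom.comp_apply, hrU]; exact hχ
  have ha_K : ∀ x : Hgp, (x : F) ∈ K → achar x = 1 := by
    intro x hx
    have h1 : r x = 1 := Subtype.ext (by
      show QuotientGroup.mk (x : F) = ((1 : Z) : F ⧸ K)
      rw [(QuotientGroup.eq_one_iff _).2 hx]; rfl)
    rw [hachar, MonoidHom.comp_apply, h1, map_one]
  -- Free group structure on Hgp via Nielsen–Schreier
  set SG := IsFreeGroup.Generators ↥Hgp with hSG
  set ρ : (SG → ℂ) → (↥Hgp →* AffC) :=
    fun d => IsFreeGroup.lift (fun s => ⟨achar (IsFreeGroup.of s), d s⟩) with hρ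
  have hρof : ∀ d s, ρ d (IsFreeGroup.of s) = ⟨achar (IsFreeGroup.of s), d s⟩ := by
    intro d s; rw [hρ]; exact IsFreeGroup.lift_of _ _
  have hρa : ∀ d (h : Hgp), (ρ d h).a = achar h := by
    intro d h
    have hcomp : AffC.aHom.comp (ρ d) = achar :=
      IsFreeGroup.ext_hom fun s => by rw [MonoidHom.comp_apply, hρof]; rfl
    exact DFunLike.congr_fun hcomp h
  set D : (SG → ℂ) → ↥Hgp → ℂ := fun d h => (ρ d h).t with hD
  have hDmulK : ∀ (d : SG → ℂ) (x y : Hgp), (x : F) ∈ K → D d (x * y) = D d x + D d y := by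
    intro d x y hx
    show (ρ d (x * y)).t = (ρ d x).t + (ρ d y).t
    rw [map_mul, AffC.mul_t, hρa, ha_K x hx, Units.val_one, one_mul]
  -- vanishing of D on K
  have hvan : ∀ (d : SG → ℂ) (γ : F) (hγ : γ ∈ K), D d ⟨γ, hKH hγ⟩ = 0 := by
    intro d γ hγ
    set φ : ↥K →* Multiplicative ℂ := MonoidHom.mk'
      (fun k => Multiplicative.ofAdd (D d ⟨(k : F), hKH k.2⟩))
      (by
        intro k k'
        show Multiplicative.ofAdd (D d ⟨((k * k' : ↥K) : F), hKH (k * k').2⟩)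
            = Multiplicative.ofAdd (D d ⟨(k : F), hKH k.2⟩)
              * Multiplicative.ofAdd (D d ⟨(k' : F), hKH k'.2⟩)
        rw [← ofAdd_add]
        congr 1
        have hsplit : (⟨((k * k' : ↥K) : F), hKH (k * k').2⟩ : Hgp)
            = ⟨(k : F), hKH k.2⟩ * ⟨(k' : F), hKH k'.2⟩ := Subtype.ext rfl
        rw [hsplit, hDmulK d _ _ k.2]) with hφ
    have hM : (⁅K, K⁆ : Subgroup F) ≤ (φ.ker.map K.subtype) := by
      rw [Subgroup.commutator_le]
      intro g₁ hg₁ g₂ hg₂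
      open scoped commutatorElement in
      refine Subgroup.mem_map.2 ⟨⁅(⟨g₁, hg₁⟩ : ↥K), ⟨g₂, hg₂⟩⁆, ?_, rfl⟩
      show φ _ = 1
      rw [map_commutatorElement]
      exact commutatorElement_eq_one_iff_commute.2 (Commute.all _ _)
    have hconjK : u * γ * u⁻¹ ∈ K := ‹K.Normal›.conj_mem γ hγ u
    have hxK : u * γ * u⁻¹ * γ⁻¹ ∈ K := K.mul_mem hconjK (K.inv_mem hγ)
    obtain ⟨y, hy, hyeq⟩ := Subgroup.mem_map.1 (hM (star γ hγ))
    have hDx : D d ⟨u * γ * u⁻¹ * γ⁻¹, hKH hxK⟩ = 0 := by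
      have hφy : φ y = 1 := hy
      have h2 : D d ⟨(y : F), hKH y.2⟩ = 0 := by
        simpa [hφ] using congrArg Multiplicative.toAdd hφy
      have h3 : (⟨(y : F), hKH y.2⟩ : Hgp) = ⟨u * γ * u⁻¹ * γ⁻¹, hKH hxK⟩ :=
        Subtype.ext hyeq
      rw [h3] at h2; exact h2
    have hsplit : (⟨u * γ * u⁻¹ * γ⁻¹, hKH hxK⟩ : Hgp)
        = ⟨u, huH⟩ * ⟨γ, hKH hγ⟩ * (⟨u, huH⟩ : Hgp)⁻¹ * (⟨γ, hKH hγ⟩ : Hgp)⁻¹ :=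
      Subtype.ext rfl
    rw [hsplit] at hDx
    have hDx' : ((ρ d ⟨u, huH⟩) * (ρ d ⟨γ, hKH hγ⟩) * (ρ d ⟨u, huH⟩)⁻¹
        * (ρ d ⟨γ, hKH hγ⟩)⁻¹).t = 0 := by
      have : (ρ d (⟨u, huH⟩ * ⟨γ, hKH hγ⟩ * (⟨u, huH⟩ : Hgp)⁻¹ * (⟨γ, hKH hγ⟩ : Hgp)⁻¹)).t = 0 :=
        hDx
      rwa [map_mul, map_mul, map_mul, map_inv, map_inv] at this
    exact AffC.t_eq_zero_of_commutator
      (by rw [hρa]; exact ha_K _ hγ)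
      (by rw [hρa]; exact fun hh => ha_u (Units.val_eq_one.1 hh))
      hDx'
  -- a cocycle vanishing on K is determined by its value at u
  have huniq : ∀ d d' : SG → ℂ, D d ⟨u, huH⟩ = D d' ⟨u, huH⟩ → ∀ h : Hgp, ρ d h = ρ d' h := by
    intro d d' hdd h
    obtain ⟨x, hx⟩ := h
    induction hx using Subgroup.closure_induction with
    | mem x hxS =>
        rcases hxS with hxK | hxu
        · refine AffC.ext' (by rw [hρa, hρa]) ?_
          show D d ⟨x, _⟩ = D d' ⟨x, _⟩
          rw [hvan d x hxK, hvan d' x hxK]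
        · have hux : (⟨x, Subgroup.subset_closure (Or.inr hxu)⟩ : Hgp) = ⟨u, huH⟩ :=
            Subtype.ext hxu
          rw [hux]
          exact AffC.ext' (by rw [hρa, hρa]) hdd
    | one =>
        have h1 : (⟨(1 : F), one_mem _⟩ : Hgp) = 1 := rfl
        rw [h1, map_one, map_one]
    | mul x y hxm hym ihx ihy =>
        have hsplit : (⟨x * y, mul_mem hxm hym⟩ : Hgp) = ⟨x, hxm⟩ * ⟨y, hym⟩ := rfl
        rw [hsplit, map_mul, map_mul, ihx, ihy]
    | inv x hxm ih =>
        have hsplit : (⟨x⁻¹, inv_mem hxm⟩ : Hgp) = (⟨x, hxm⟩ : Hgp)⁻¹ := rfl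
        rw [hsplit, map_inv, map_inv, ih]
  -- the zero cocycle
  have hD0 : ∀ h : Hgp, D (fun _ => 0) h = 0 := by
    have hhom : ρ (fun _ => 0) = (MonoidHom.mk' (fun e : ℂˣ => (⟨e, 0⟩ : AffC))
        (fun e e' => AffC.ext' rfl (by simp))).comp achar :=
      IsFreeGroup.ext_hom fun s => by rw [hρof, MonoidHom.comp_apply]; rfl
    intro h
    show (ρ (fun _ => 0) h).t = 0
    rw [hhom]; rfl
  -- scaling cocycles
  have hscale : ∀ (c : ℂˣ) (d : SG → ℂ) (h : Hgp),
      D (fun s => (c : ℂ) * d s) h = (c : ℂ) * D d h := by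
    intro c d
    set σ : AffC := ⟨c, 0⟩ with hσ
    have hcmul : ∀ p : AffC, σ * p * σ⁻¹ = ⟨p.a, (c : ℂ) * p.t⟩ := by
      intro p
      refine AffC.ext' ?_ ?_
      · show c * p.a * c⁻¹ = p.a
        rw [mul_comm c p.a, mul_inv_cancel_right]
      · show (σ * p).t + ((σ * p).a : ℂ) * (σ⁻¹).t = (c : ℂ) * p.t
        simp [hσ]
    have hconj : ρ (fun s => (c : ℂ) * d s) = (MulAut.conj σ).toMonoidHom.comp (ρ d) :=
      IsFreeGroup.ext_hom fun s => by
        rw [hρof]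
        show _ = (MulAut.conj σ) ((ρ d) (IsFreeGroup.of s))
        rw [hρof, MulAut.conj_apply, hcmul]
    intro h
    show (ρ (fun s => (c : ℂ) * d s) h).t = (c : ℂ) * (ρ d h).t
    rw [hconj]
    show ((MulAut.conj σ) ((ρ d) h)).t = _
    rw [MulAut.conj_apply, hcmul]
  -- the generators are nontrivial since K is nonabelian
  have hSnt : Nontrivial SG := by
    by_contra hns
    rw [not_nontrivial_iff_subsingleton] at hns
    have hcomm : ∀ x y : Hgp, x * y = y * x := by
      intro x y
      apply (IsFreeGroup.toFreeGroup ↥Hgp).injective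
      rw [map_mul, map_mul]
      exact freeGroup_commute_of_subsingleton _ _
    exact hnc (congrArg Subtype.val (hcomm ⟨γ₁, hKH h₁⟩ ⟨γ₂, hKH h₂⟩))
  obtain ⟨s₁, s₂, hs⟩ := hSnt
  have hDof : ∀ (d : SG → ℂ) s, D d (IsFreeGroup.of s) = d s := fun d s => by
    show (ρ d _).t = d s; rw [hρof]
  set δ₁ : SG → ℂ := fun s => if s = s₁ then 1 else 0 with hδ₁
  set δ₂ : SG → ℂ := fun s => if s = s₂ then 1 else 0 with hδ₂
  have hne : ∀ (d : SG → ℂ) (s0 : SG), d s0 ≠ 0 → D d ⟨u, huH⟩ ≠ 0 := by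
    intro d s0 hd h0
    have heq := huniq d (fun _ => 0) (by rw [h0, hD0]) (IsFreeGroup.of s0)
    have h2 : d s0 = 0 := ((hDof d s0).symm.trans (congrArg AffC.t heq)).trans
      (hDof (fun _ => 0) s0)
    exact hd h2
  have hα₁ : D δ₁ ⟨u, huH⟩ ≠ 0 := hne δ₁ s₁ (by simp [hδ₁])
  have hα₂ : D δ₂ ⟨u, huH⟩ ≠ 0 := hne δ₂ s₂ (by simp [hδ₂])
  set c : ℂˣ := Units.mk0 (D δ₁ ⟨u, huH⟩ * (D δ₂ ⟨u, huH⟩)⁻¹)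
    (mul_ne_zero hα₁ (inv_ne_zero hα₂)) with hc
  have hcu : D (fun s => (c : ℂ) * δ₂ s) ⟨u, huH⟩ = D δ₁ ⟨u, huH⟩ := by
    rw [hscale]
    show (D δ₁ ⟨u, huH⟩ * (D δ₂ ⟨u, huH⟩)⁻¹) * D δ₂ ⟨u, huH⟩ = D δ₁ ⟨u, huH⟩
    field_simp
  have heq := huniq δ₁ (fun s => (c : ℂ) * δ₂ s) hcu.symm (IsFreeGroup.of s₁)
  have h2 : δ₁ s₁ = (c : ℂ) * δ₂ s₁ :=
    ((hDof δ₁ s₁).symm.trans (congrArg AffC.t heq)).trans (hDof (fun s => (c : ℂ) * δ₂ s) s₁)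
  rw [hδ₁, hδ₂] at h2
  simp only [if_pos rfl, if_neg hs, mul_zero] at h2
  exact one_ne_zero h2

/-- If an automorphism `ψ` of a finite-rank free group `F` preserves a finite-index
normal subgroup `K` of rank at least 2 and induces the identity on the abelianization
`K/[K,K]`, then `ψ` induces the identity on the quotient `Γ = F/K`. -/
theorem stmt_16 (n : ℕ) (hn : 2 ≤ n)
    (K : Subgroup (FreeGroup (Fin n))) [K.Normal] [K.FiniteIndex]
    (ι : Type) [Nontrivial ι] (b : FreeGroupBasis ι ↥K)
    (ψ : FreeGroup (Fin n) ≃* FreeGroup (Fin n))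
    (hK : K.map ψ.toMonoidHom = K)
    (hab : ∀ γ ∈ K, ψ γ * γ⁻¹ ∈ (⁅K, K⁆ : Subgroup (FreeGroup (Fin n)))) :
    ∀ w : FreeGroup (Fin n), ψ w * w⁻¹ ∈ K := by
  intro w
  by_contra hu
  set N := (⁅K, K⁆ : Subgroup (FreeGroup (Fin n))) with hN
  have hNnorm : N.Normal := Subgroup.commutator_normal K K
  have star : ∀ γ ∈ K, (ψ w * w⁻¹) * γ * (ψ w * w⁻¹)⁻¹ * γ⁻¹ ∈ N := by
    intro γ hγ
    have hγ' : w⁻¹ * γ * w ∈ K := by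
      have := ‹K.Normal›.conj_mem γ hγ w⁻¹
      rwa [inv_inv] at this
    have key : ψ γ = ψ w * ψ (w⁻¹ * γ * w) * (ψ w)⁻¹ := by
      rw [map_mul, map_mul, map_inv]
      group
    have hx : ψ γ * γ⁻¹ ∈ N := hab γ hγ
    have hη : ψ (w⁻¹ * γ * w) * (w⁻¹ * γ * w)⁻¹ ∈ N := hab _ hγ'
    have hy : ψ w * (ψ (w⁻¹ * γ * w) * (w⁻¹ * γ * w)⁻¹) * (ψ w)⁻¹ ∈ N :=
      hNnorm.conj_mem _ hη (ψ w)
    have heq : (ψ w * w⁻¹) * γ * (ψ w * w⁻¹)⁻¹ * γ⁻¹ =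
        (ψ w * (ψ (w⁻¹ * γ * w) * (w⁻¹ * γ * w)⁻¹) * (ψ w)⁻¹)⁻¹ * (ψ γ * γ⁻¹) := by
      rw [key]; group
    rw [heq]
    exact N.mul_mem (N.inv_mem hy) hx
  obtain ⟨i₁, i₂, hi⟩ := exists_pair_ne ι
  have hK12 : ((b i₁ : ↥K) : FreeGroup (Fin n)) * ((b i₂ : ↥K) : FreeGroup (Fin n))
      ≠ ((b i₂ : ↥K) : FreeGroup (Fin n)) * ((b i₁ : ↥K) : FreeGroup (Fin n)) := by
    intro hcon
    have hKel : (b i₁ : ↥K) * b i₂ = b i₂ * b i₁ := Subtype.ext hcon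
    have h2 := congrArg b.repr hKel
    rw [map_mul, map_mul, b.repr_apply_coe, b.repr_apply_coe] at h2
    exact freeGroup_not_commute hi h2
  exact faithful_aux K ((b i₁ : ↥K) : FreeGroup (Fin n)) ((b i₂ : ↥K) : FreeGroup (Fin n))
    (b i₁).2 (b i₂).2 hK12 (ψ w * w⁻¹) hu star
end
end

section
/- Let F₂ be the free group on x₁, x₂. The element w = α⁻¹x₁α·x₂, where α = x₂x₁x₂⁻²x₁⁻², is not a primitive element of F₂ (it belongs to no free basis of F₂). Consequently, the endomorphism φ of F₂ defined by φ(x₁) = α⁻¹x₁α and φ(x₂) = x₂ is not surjective. -/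
/-- An element of a group is primitive if it belongs to some free basis. -/
def IsPrimitiveElt {G : Type*} [Group G] (x : G) : Prop :=
  ∃ (ι : Type) (b : FreeGroupBasis ι G) (i : ι), b i = x

section Aux

/-- Precomposition with a `MulEquiv` gives an equivalence of hom-sets. -/
def homCongrAux {G H K : Type*} [Group G] [Group H] [Group K] (e : G ≃* H) :
    (G →* K) ≃ (H →* K) where
  toFun f := f.comp e.symm.toMonoidHom
  invFun f := f.comp e.toMonoidHom
  left_inv f := by ext x; simp
  right_inv f := by ext x; simp

/-- Any free group basis of the free group of rank 2 has exactly two elements. -/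
lemma card_eq_two_of_basis {ι : Type} (b : FreeGroupBasis ι (FreeGroup (Fin 2))) :
    ∃ e : ι ≃ Fin 2, True := by
  classical
  set G₂ := Multiplicative (ZMod 2)
  -- hom-set equivalence
  have E : (ι → G₂) ≃ (Fin 2 → G₂) :=
    (FreeGroup.lift.trans ((homCongrAux b.repr.symm).trans FreeGroup.lift.symm))
  -- ι is finite
  have hinj : Function.Injective
      (fun i : ι => Function.update (fun _ : ι => (1 : G₂)) i (Multiplicative.ofAdd 1)) := by
    intro i j hij
    by_contra hne
    have h1 := congrFun hij i
    simp only [Function.update_apply, if_pos rfl] at h1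
    rw [if_neg hne] at h1
    exact (by decide : (Multiplicative.ofAdd (1 : ZMod 2)) ≠ 1) h1
  haveI : Fintype ι := @Fintype.ofInjective _ _ (Fintype.ofEquiv _ E.symm) _ hinj
  have hcard : Fintype.card (ι → G₂) = Fintype.card (Fin 2 → G₂) := Fintype.card_congr E
  rw [Fintype.card_fun, Fintype.card_fun] at hcard
  have hG2 : Fintype.card G₂ = 2 := by decide
  rw [hG2] at hcard
  have : Fintype.card ι = 2 := Nat.pow_right_injective (le_refl 2) (by simpa using hcard)
  exact ⟨Fintype.equivFinOfCardEq this, trivial⟩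

lemma fin2_cases : ∀ j₀ j : Fin 2, j = j₀ ∨ j = j₀ + 1 := by decide

end Aux

/-- In the free group `F₂ = F⟨x₁,x₂⟩`, with `α = x₂x₁x₂⁻²x₁⁻²`, the element
`w = α⁻¹x₁α·x₂` is not primitive; consequently the endomorphism `φ` with
`φ(x₁) = α⁻¹x₁α`, `φ(x₂) = x₂` is not surjective. -/
theorem stmt_17
    (x₁ x₂ α w : FreeGroup (Fin 2))
    (hx₁ : x₁ = FreeGroup.of 0) (hx₂ : x₂ = FreeGroup.of 1)
    (hα : α = x₂ * x₁ * x₂⁻¹ * x₂⁻¹ * x₁⁻¹ * x₁⁻¹)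
    (hw : w = α⁻¹ * x₁ * α * x₂)
    (φ : FreeGroup (Fin 2) →* FreeGroup (Fin 2))
    (hφ : φ = FreeGroup.lift ![α⁻¹ * x₁ * α, x₂]) :
    ¬ IsPrimitiveElt w ∧ ¬ Function.Surjective φ := by
  classical
  -- the certifying finite quotient: a map to S₃ killing w with noncommuting images of x₁, x₂
  set A : Equiv.Perm (Fin 3) := Equiv.swap 1 2 with hA
  set B : Equiv.Perm (Fin 3) := Equiv.swap 0 1 with hB
  set ψ : FreeGroup (Fin 2) →* Equiv.Perm (Fin 3) := FreeGroup.lift ![A, B] with hψ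
  have hψ0 : ψ x₁ = A := by rw [hx₁, hψ]; simp [FreeGroup.lift_apply_of]
  have hψ1 : ψ x₂ = B := by rw [hx₂, hψ]; simp [FreeGroup.lift_apply_of]
  have hψw : ψ w = 1 := by
    rw [hw, hα, hx₁, hx₂, hψ]
    simp only [map_mul, map_inv, FreeGroup.lift_apply_of]
    decide
  have hncomm : A * B ≠ B * A := by rw [hA, hB]; decide
  constructor
  · -- not primitive
    rintro ⟨ι, b, i₀, hbi₀⟩
    obtain ⟨e, -⟩ := card_eq_two_of_basis b
    set b' : FreeGroupBasis (Fin 2) (FreeGroup (Fin 2)) := b.reindex e with hb'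
    have hb'w : b' (e i₀) = w := by
      rw [hb', FreeGroupBasis.reindex_apply, Equiv.symm_apply_apply, hbi₀]
    set j₀ : Fin 2 := e i₀ with hj₀
    set v : FreeGroup (Fin 2) := b' (j₀ + 1) with hv
    -- every generator lies in {w, v}
    have hrange : Set.range ⇑b' ⊆ {w, v} := by
      rintro _ ⟨j, rfl⟩
      rcases fin2_cases j₀ j with h | h
      · left; rw [h, hb'w]
      · right; rw [h, hv]; exact rfl
    -- the group is generated by {w, v}
    have htop : Subgroup.closure ({w, v} : Set (FreeGroup (Fin 2))) = ⊤ := by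
      rw [eq_top_iff]
      have h1 : Subgroup.closure (Set.range ⇑b') = ⊤ := by
        have := FreeGroup.closure_range_of (Fin 2)
        rw [eq_top_iff]
        intro g _
        have hg : b'.repr g ∈ Subgroup.closure (Set.range (FreeGroup.of : Fin 2 → _)) := by
          rw [this]; trivial
        have : b'.repr.symm (b'.repr g) ∈
            Subgroup.map b'.repr.symm.toMonoidHom
              (Subgroup.closure (Set.range (FreeGroup.of : Fin 2 → _))) :=
          ⟨_, hg, rfl⟩
        rw [MulEquiv.symm_apply_apply] at this
        rw [MonoidHom.map_closure] at this
        refine Subgroup.closure_mono ?_ this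
        rintro _ ⟨_, ⟨j, rfl⟩, rfl⟩
        exact ⟨j, rfl⟩
      calc (⊤ : Subgroup (FreeGroup (Fin 2))) = Subgroup.closure (Set.range ⇑b') := h1.symm
        _ ≤ Subgroup.closure {w, v} := Subgroup.closure_mono hrange
    -- hence the image of ψ lies in the cyclic subgroup generated by ψ v
    have hmem : ∀ g : FreeGroup (Fin 2), ψ g ∈ Subgroup.zpowers (ψ v) := by
      intro g
      have hg : g ∈ Subgroup.closure ({w, v} : Set (FreeGroup (Fin 2))) := by
        rw [htop]; trivial
      refine Subgroup.closure_induction ?_ ?_ ?_ ?_ hg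
      · rintro y (rfl | rfl)
        · rw [hψw]; exact one_mem _
        · exact Subgroup.mem_zpowers _
      · rw [map_one]; exact one_mem _
      · intro y z _ _ hy hz; rw [map_mul]; exact mul_mem hy hz
      · intro y _ hy; rw [map_inv]; exact inv_mem hy
    obtain ⟨m, hm⟩ := hmem x₁
    obtain ⟨n, hn⟩ := hmem x₂
    apply hncomm
    rw [← hψ0, ← hψ1, ← hm, ← hn, ← zpow_add, ← zpow_add, add_comm]
  · -- not surjective
    intro hsurj
    have hφv : ∀ g : FreeGroup (Fin 2), ψ (φ g) ∈ Subgroup.zpowers B := by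
      intro g
      induction g using FreeGroup.induction_on with
      | C1 => rw [map_one, map_one]; exact one_mem _
      | of i =>
        fin_cases i
        · show ψ (φ (FreeGroup.of (0 : Fin 2))) ∈ Subgroup.zpowers B
          have : φ (FreeGroup.of 0) = α⁻¹ * x₁ * α := by
            rw [hφ]; simp [FreeGroup.lift_apply_of]
          rw [this]
          have h3 : ψ (α⁻¹ * x₁ * α) = B⁻¹ := by
            have h2 : ψ (α⁻¹ * x₁ * α) * B = 1 := by
              rw [← hψ1, ← map_mul, ← hw, hψw]
            rwa [mul_eq_one_iff_eq_inv] at h2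
          rw [h3]
          exact inv_mem (Subgroup.mem_zpowers B)
        · show ψ (φ (FreeGroup.of (1 : Fin 2))) ∈ Subgroup.zpowers B
          have : φ (FreeGroup.of 1) = x₂ := by rw [hφ]; simp [FreeGroup.lift_apply_of]
          rw [this, hψ1]
          exact Subgroup.mem_zpowers B
      | inv_of i h => rw [map_inv, map_inv]; exact inv_mem h
      | mul y z hy hz => rw [map_mul, map_mul]; exact mul_mem hy hz
    obtain ⟨g₁, hg₁⟩ := hsurj x₁
    obtain ⟨g₂, hg₂⟩ := hsurj x₂
    have h1 : A ∈ Subgroup.zpowers B := by rw [← hψ0, ← hg₁]; exact hφv g₁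
    obtain ⟨m, hm⟩ := h1
    simp only at hm
    apply hncomm
    rw [← hm]
    exact ((Commute.refl B).zpow_left m).eq
end
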